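/- The posets P^B_3 and Q^B_3 are not isomorphic: there is no bijection φ from B_3(21, 2̄1̄) onto itself such that for all b, c ∈ B_3(21, 2̄1̄), one has [b = c or Des(b) ⊊ Des(c)] if and only if [φ(b) = φ(c) or Exc(φ(b)) ⊊ Exc(φ(c))], where Des is the descent set and Exc is the type-B excedence set. -/
import Mathlib

structure SignedPerm (n : ℕ) where
  perm : Equiv.Perm (Fin n)
  bar : Fin n → Bool

def AvoidsB {n : ℕ} (b : SignedPerm n) : Prop :=
  ∀ i j : Fin n, i < j → b.bar i = b.bar j → ¬ b.perm j < b.perm i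

def symbKey {n : ℕ} (b : SignedPerm n) (i : Fin n) : ℕ :=
  if b.bar i then 2 * n - 1 - (b.perm i : ℕ) else (b.perm i : ℕ)

def DesB {n : ℕ} (b : SignedPerm n) : Set ℕ :=
  {i | (∃ h : 1 ≤ i ∧ i < n,
          symbKey b ⟨i, h.2⟩ <
            symbKey b ⟨i - 1, Nat.lt_of_le_of_lt (Nat.sub_le i 1) h.2⟩)
    ∨ (∃ h : 0 < n, i = n ∧ b.bar ⟨n - 1, Nat.sub_lt h Nat.one_pos⟩ = true)}

def ExcB {n : ℕ} (b : SignedPerm n) : Set ℕ :=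
  {i | ∃ h : 1 ≤ i ∧ i ≤ n,
        let j : Fin n := ⟨i - 1, Nat.lt_of_lt_of_le (Nat.sub_lt h.1 Nat.one_pos) h.2⟩
        (j : ℕ) < (b.perm j : ℕ) ∨ ((b.perm j : ℕ) = (j : ℕ) ∧ b.bar j = true)}

-- auxiliary
lemma memIteSingleton {p : Prop} [Decidable p] {a k : ℕ} :
    (a ∈ if p then ({k} : Finset ℕ) else ∅) ↔ p ∧ a = k := by
  split_ifs with h <;> simp [h]

def dF (b : SignedPerm 3) : Finset ℕ :=
  (if symbKey b ⟨1, by norm_num⟩ < symbKey b ⟨0, by norm_num⟩ then {1} else ∅) ∪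
  (if symbKey b ⟨2, by norm_num⟩ < symbKey b ⟨1, by norm_num⟩ then {2} else ∅) ∪
  (if b.bar ⟨2, by norm_num⟩ = true then {3} else ∅)

def eF (b : SignedPerm 3) : Finset ℕ :=
  (if (0:ℕ) < (b.perm ⟨0, by norm_num⟩ : ℕ) ∨
      ((b.perm ⟨0, by norm_num⟩ : ℕ) = 0 ∧ b.bar ⟨0, by norm_num⟩ = true) then {1} else ∅) ∪
  (if (1:ℕ) < (b.perm ⟨1, by norm_num⟩ : ℕ) ∨
      ((b.perm ⟨1, by norm_num⟩ : ℕ) = 1 ∧ b.bar ⟨1, by norm_num⟩ = true) then {2} else ∅) ∪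
  (if (2:ℕ) < (b.perm ⟨2, by norm_num⟩ : ℕ) ∨
      ((b.perm ⟨2, by norm_num⟩ : ℕ) = 2 ∧ b.bar ⟨2, by norm_num⟩ = true) then {3} else ∅)

lemma mem_desB (b : SignedPerm 3) (i : ℕ) :
    i ∈ DesB b ↔
      (i = 1 ∧ symbKey b ⟨1, by norm_num⟩ < symbKey b ⟨0, by norm_num⟩) ∨
      (i = 2 ∧ symbKey b ⟨2, by norm_num⟩ < symbKey b ⟨1, by norm_num⟩) ∨
      (i = 3 ∧ b.bar ⟨2, by norm_num⟩ = true) := by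
  constructor
  · rintro (⟨⟨h1, h2⟩, hk⟩ | ⟨hh, rfl, hb⟩)
    · interval_cases i
      · exact Or.inl ⟨rfl, hk⟩
      · exact Or.inr (Or.inl ⟨rfl, hk⟩)
    · exact Or.inr (Or.inr ⟨rfl, hb⟩)
  · rintro (⟨rfl, h⟩ | ⟨rfl, h⟩ | ⟨rfl, h⟩)
    · exact Or.inl ⟨⟨le_refl 1, by norm_num⟩, h⟩
    · exact Or.inl ⟨⟨by norm_num, by norm_num⟩, h⟩
    · exact Or.inr ⟨by norm_num, rfl, h⟩

lemma mem_excB (b : SignedPerm 3) (i : ℕ) :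
    i ∈ ExcB b ↔
      (i = 1 ∧ ((0:ℕ) < (b.perm ⟨0, by norm_num⟩ : ℕ) ∨
        ((b.perm ⟨0, by norm_num⟩ : ℕ) = 0 ∧ b.bar ⟨0, by norm_num⟩ = true))) ∨
      (i = 2 ∧ ((1:ℕ) < (b.perm ⟨1, by norm_num⟩ : ℕ) ∨
        ((b.perm ⟨1, by norm_num⟩ : ℕ) = 1 ∧ b.bar ⟨1, by norm_num⟩ = true))) ∨
      (i = 3 ∧ ((2:ℕ) < (b.perm ⟨2, by norm_num⟩ : ℕ) ∨
        ((b.perm ⟨2, by norm_num⟩ : ℕ) = 2 ∧ b.bar ⟨2, by norm_num⟩ = true))) := by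
  constructor
  · rintro ⟨⟨h1, h2⟩, hk⟩
    dsimp only at hk
    interval_cases i
    · exact Or.inl ⟨rfl, hk⟩
    · exact Or.inr (Or.inl ⟨rfl, hk⟩)
    · exact Or.inr (Or.inr ⟨rfl, hk⟩)
  · rintro (⟨rfl, h⟩ | ⟨rfl, h⟩ | ⟨rfl, h⟩)
    · exact ⟨⟨le_refl 1, by norm_num⟩, h⟩
    · exact ⟨⟨by norm_num, by norm_num⟩, h⟩
    · exact ⟨⟨by norm_num, le_refl 3⟩, h⟩

lemma desB_eq (b : SignedPerm 3) : DesB b = ↑(dF b) := by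
  ext i
  rw [Finset.mem_coe, mem_desB]
  simp only [dF, Finset.mem_union, memIteSingleton]
  tauto

lemma excB_eq (b : SignedPerm 3) : ExcB b = ↑(eF b) := by
  ext i
  rw [Finset.mem_coe, mem_excB]
  simp only [eF, Finset.mem_union, memIteSingleton]
  tauto

instance : DecidableEq (SignedPerm 3) := fun a b =>
  decidable_of_iff (a.perm = b.perm ∧ a.bar = b.bar)
    (by cases a; cases b; simp [SignedPerm.mk.injEq])

def spEquiv : SignedPerm 3 ≃ Equiv.Perm (Fin 3) × (Fin 3 → Bool) where
  toFun s := (s.perm, s.bar)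
  invFun p := ⟨p.1, p.2⟩
  left_inv s := rfl
  right_inv p := rfl

instance : Fintype (SignedPerm 3) := Fintype.ofEquiv _ spEquiv.symm

instance : DecidablePred (AvoidsB (n := 3)) := fun b => by
  unfold AvoidsB; infer_instance

/-- The posets `P^B_3` (descent-set order) and `Q^B_3` (type-B excedence-set
order) on the `(21, 2̄1̄)`-avoiding signed permutations of `[3]` are not
isomorphic. -/
theorem stmt19 :
    ¬ ∃ φ : {b : SignedPerm 3 // AvoidsB b} ≃ {b : SignedPerm 3 // AvoidsB b},
      ∀ b c : {b : SignedPerm 3 // AvoidsB b},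
        (b = c ∨ DesB b.1 ⊂ DesB c.1) ↔
          (φ b = φ c ∨ ExcB (φ b).1 ⊂ ExcB (φ c).1) := by
  rintro ⟨φ, hφ⟩
  have hrel : ∀ b c : {b : SignedPerm 3 // AvoidsB b},
      (dF b.1 ⊂ dF c.1) ↔ (eF (φ b).1 ⊂ eF (φ c).1) := by
    intro b c
    by_cases hbc : b = c
    · subst hbc; exact iff_of_false (ssubset_irrefl _) (ssubset_irrefl _)
    · have h := hφ b c
      rw [desB_eq, desB_eq, excB_eq, excB_eq, Finset.coe_ssubset,
        Finset.coe_ssubset] at h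
      have hφne : φ b ≠ φ c := fun e => hbc (φ.injective e)
      constructor
      · intro hs
        rcases h.mp (Or.inr hs) with e | hs'
        · exact absurd e hφne
        · exact hs'
      · intro hs
        rcases h.mpr (Or.inr hs) with e | hs'
        · exact absurd e hbc
        · exact hs'
  have e : {p : {b : SignedPerm 3 // AvoidsB b} × {b : SignedPerm 3 // AvoidsB b} //
        dF p.1.1 ⊂ dF p.2.1} ≃
      {p : {b : SignedPerm 3 // AvoidsB b} × {b : SignedPerm 3 // AvoidsB b} //
        eF p.1.1 ⊂ eF p.2.1} :=
    (Equiv.prodCongr φ φ).subtypeEquiv (fun p => hrel p.1 p.2)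
  have hc := Fintype.card_congr e
  have h1 : Fintype.card {p : {b : SignedPerm 3 // AvoidsB b} × {b : SignedPerm 3 // AvoidsB b} //
      dF p.1.1 ⊂ dF p.2.1} = 91 := by decide
  have h2 : Fintype.card {p : {b : SignedPerm 3 // AvoidsB b} × {b : SignedPerm 3 // AvoidsB b} //
      eF p.1.1 ⊂ eF p.2.1} = 99 := by decide
  rw [h1, h2] at hc
  exact absurd hc (by norm_num)
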